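/- arXiv:2512.18136 — 2 statements merged into one kernel-verified Lean document; each statement's English description precedes it below -/
import Mathlib

section
/- Let e, k, n be positive integers with k ≤ e - 3 and (n-2)/(n-1) < k/(e-1) ≤ (n-1)/n. Then the numerical semigroup S = ⟨e, e+k+1, ..., 2e-1⟩ is symmetric if and only if (n-1)k = (n-2)e - (n-3). -/
/-- The set of gaps of a numerical semigroup (submonoid of ℕ). -/
def gapsOf (S : AddSubmonoid ℕ) : Set ℕ := {n | n ∉ S}

/-- The Frobenius number: the largest gap. -/
noncomputable def frobeniusNumber (S : AddSubmonoid ℕ) : ℕ := sSup (gapsOf S)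

/-- The genus: the number of gaps. -/
noncomputable def genusOf (S : AddSubmonoid ℕ) : ℕ := Nat.card (gapsOf S)

/-- A numerical semigroup is symmetric iff 2g = F + 1. -/
def IsSymmetricNS (S : AddSubmonoid ℕ) : Prop :=
  2 * genusOf S = frobeniusNumber S + 1

/-- The Sally type semigroup `S_k^e(j) = ⟨e,…,e+j-1, e+j+k,…,2e-1⟩`. -/
def sally (e k j : ℕ) : AddSubmonoid ℕ :=
  AddSubmonoid.closure (Set.Ico e (e + j) ∪ Set.Ico (e + j + k) (2 * e))

lemma sally_aux_in (e k : ℕ) (hk3 : k + 3 ≤ e) :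
    ∀ t a u, t ≤ a → t*(k+1) ≤ u → u ≤ t*(e-1) → a*e + u ∈ sally e k 1 := by
  intro t
  induction t with
  | zero =>
    intro a u _ _ h2
    simp only [Nat.zero_mul, Nat.le_zero] at h2
    subst h2
    have he : e ∈ sally e k 1 := AddSubmonoid.subset_closure (Or.inl (by simp))
    simpa using AddSubmonoid.nsmul_mem _ he a
  | succ t ih =>
    intro a u hta h1 h2
    set c := max (k+1) (u - t*(e-1)) with hc
    have e1 : (t+1)*(k+1) = t*(k+1)+(k+1) := by ring
    have e2 : (t+1)*(e-1) = t*(e-1)+(e-1) := by ring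
    have hc1 : k+1 ≤ c := le_max_left _ _
    have hc2 : c ≤ e-1 := max_le (by omega) (by omega)
    have hmul : t*(k+1) ≤ t*(e-1) := Nat.mul_le_mul_left _ (by omega)
    have hcu : t*(k+1) + c ≤ u := by
      rcases max_cases (k+1) (u - t*(e-1)) with ⟨h,_⟩|⟨h,_⟩ <;> omega
    have hue : u - c ≤ t*(e-1) := by
      have := le_max_right (k+1) (u - t*(e-1)); omega
    have ha : 1 ≤ a := by omega
    have key : a*e + u = ((a-1)*e + (u - c)) + (e + c) := by
      have h3 : (a-1)*e + e = a*e := by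
        have : ((a-1)+1)*e = (a-1)*e + e := by ring
        rw [← this, Nat.sub_add_cancel ha]
      omega
    rw [key]
    exact add_mem (ih (a-1) (u-c) (by omega) (by omega) hue)
      (AddSubmonoid.subset_closure (Or.inr ⟨by omega, by omega⟩))

lemma mem_sally_iff (e k : ℕ) (hk3 : k + 3 ≤ e) (m : ℕ) :
    m ∈ sally e k 1 ↔ ∃ a t u, t ≤ a ∧ t*(k+1) ≤ u ∧ u ≤ t*(e-1) ∧ m = a*e + u := by
  constructor
  · intro hm
    induction hm using AddSubmonoid.closure_induction with
    | mem x hx =>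
      rcases hx with hx | hx
      · simp only [Set.mem_Ico] at hx
        exact ⟨1, 0, 0, by omega, by omega, by omega, by omega⟩
      · simp only [Set.mem_Ico] at hx
        exact ⟨1, 1, x - e, by omega, by omega, by omega, by omega⟩
    | zero => exact ⟨0, 0, 0, by omega, by omega, by omega, by omega⟩
    | add x y _ _ hx hy =>
      obtain ⟨a1,t1,u1,h11,h12,h13,rfl⟩ := hx
      obtain ⟨a2,t2,u2,h21,h22,h23,rfl⟩ := hy
      refine ⟨a1+a2, t1+t2, u1+u2, by omega, ?_, ?_, by ring⟩
      · have : (t1+t2)*(k+1) = t1*(k+1)+t2*(k+1) := by ring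
        omega
      · have : (t1+t2)*(e-1) = t1*(e-1)+t2*(e-1) := by ring
        omega
  · rintro ⟨a,t,u,h1,h2,h3,rfl⟩
    exact sally_aux_in e k hk3 t a u h1 h2 h3

lemma mem_sally_char (e k d : ℕ) (hk : 1 ≤ k) (hd : 2 ≤ d) (he : e = k + 1 + d)
    (a r : ℕ) (hrlt : r < e) :
    a*e + r ∈ sally e k 1 ↔ (r = 0 ∨ (1 ≤ a ∧ k + 1 ≤ r + ((a - 1)/2) * d)) := by
  have he0 : 0 < e := by omega
  rw [mem_sally_iff e k (by omega)]
  constructor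
  · rintro ⟨A,t,u,htA,h1,h2,hm⟩
    rcases Nat.eq_zero_or_pos t with rfl | ht
    · left
      simp only [Nat.zero_mul, Nat.le_zero] at h2
      subst h2
      rcases le_or_gt A a with h | h
      · have := Nat.mul_le_mul_right e h
        omega
      · have h7 := Nat.mul_le_mul_right e (show a + 1 ≤ A by omega)
        have h8 : (a+1)*e = a*e + e := by ring
        omega
    · have hAa : A ≤ a := by
        by_contra hcon
        have h7 := Nat.mul_le_mul_right e (show a + 1 ≤ A by omega)
        have h8 : (a+1)*e = a*e + e := by ring
        omega
      have hu : u = (a - A)*e + r := by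
        have h7 : (A + (a - A))*e = A*e + (a-A)*e := by ring
        rw [show A + (a - A) = a by omega] at h7
        omega
      set q := a - A with hqdef
      have hqt : q < t := by
        by_contra hcon
        have h9 : t*(e-1) + t*1 = t*((e-1)+1) := (Nat.mul_add t (e-1) 1).symm
        rw [show (e-1)+1 = e by omega] at h9
        have h10 : t*e ≤ q*e := Nat.mul_le_mul_right e (by omega)
        omega
      rcases Nat.eq_zero_or_pos r with hr0 | hr1
      · left; exact hr0
      · right
        refine ⟨by omega, ?_⟩
        have hcov : k + 1 ≤ q * d + r := by
          have e1 : q*e = q*(k+1) + q*d := by rw [he]; ring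
          have e2 : (q+1)*(k+1) ≤ t*(k+1) := Nat.mul_le_mul_right _ (by omega)
          have e3 : (q+1)*(k+1) = q*(k+1) + (k+1) := by ring
          omega
        have hqj : q ≤ (a - 1)/2 := by
          rw [Nat.le_div_iff_mul_le (by norm_num)]
          omega
        have := Nat.mul_le_mul_right d hqj
        omega
  · intro h
    rcases h with hr0 | ⟨ha1, hcov⟩
    · exact ⟨a, 0, 0, Nat.zero_le a, by omega, by omega, by omega⟩
    · set j := (a-1)/2 with hj
      set i := (k + d - r)/d with hi
      have hre : r ≤ k + d := by omega
      have hid1 : i * d ≤ k + d - r := Nat.div_mul_le_self _ _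
      have hid2 : k + d - r < i * d + d := by
        have h5 : (k+d-r) % d < d := Nat.mod_lt _ (by omega)
        have h6 : d * ((k+d-r)/d) + (k+d-r) % d = k+d-r := Nat.div_add_mod _ _
        have h7 : d * i = i * d := Nat.mul_comm _ _
        rw [← hi] at h6
        omega
      have hiA : k + 1 ≤ r + i * d := by omega
      have hij : i ≤ j := by
        have hjd : k + d - r < (j+1) * d := by
          have : (j+1)*d = j*d + d := by ring
          omega
        have := (Nat.div_lt_iff_lt_mul (show 0 < d by omega)).mpr hjd
        omega
      have hrc : r + i ≤ k + d := by
        rcases Nat.eq_zero_or_pos i with h0 | h1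
        · omega
        · have : i ≤ i * d := Nat.le_mul_of_pos_right i (by omega)
          omega
      have h2i : 2*i + 1 ≤ a := by
        have : i * 2 ≤ a - 1 := (Nat.le_div_iff_mul_le (by norm_num)).mp hij
        omega
      refine ⟨a - i, i + 1, i*e + r, by omega, ?_, ?_, ?_⟩
      · have e1 : (i+1)*(k+1) = i*(k+1) + (k+1) := by ring
        have e2 : i*e = i*(k+1) + i*d := by rw [he]; ring
        omega
      · rw [show e - 1 = k + d by omega]
        have e3 : (i+1)*(k+d) = i*(k+d) + (k+d) := by ring
        have e4 : i*e = i*(k+d) + i := by rw [he]; ring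
        omega
      · have e5 : (a-i)*e + i*e = ((a-i)+i)*e := by ring
        rw [show (a-i)+i = a by omega] at e5
        omega

section Gaps
variable (e k d p : ℕ)

/-- gap count per row -/
def rowc (a : ℕ) : ℕ := if a = 0 then e - 1 else k - ((a-1)/2)*d

/-- gap finset -/
def gapF : Finset ℕ :=
  (Finset.range (2*(p+1)+1)).biUnion (fun a => Finset.Ico (a*e+1) (a*e + rowc e k d a + 1))

variable (hk : 1 ≤ k) (hd : 2 ≤ d) (he : e = k + 1 + d)
    (hA : p*d < k) (hB : k ≤ (p+1)*d)

include hk hd he in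
lemma rowc_le (a : ℕ) : rowc e k d a ≤ e - 1 := by
  rw [rowc]
  split
  · exact le_refl _
  · omega

include hk hd he hA hB in
lemma gap_eq : gapsOf (sally e k 1) = ↑(gapF e k d p) := by
  ext m
  have he0 : 0 < e := by omega
  obtain ⟨a0, r0, hr0lt, hm0⟩ : ∃ a0 r0, r0 < e ∧ m = a0*e + r0 :=
    ⟨m/e, m%e, Nat.mod_lt _ he0, by rw [Nat.mul_comm]; exact (Nat.div_add_mod m e).symm⟩
  have hchar := mem_sally_char e k d hk hd he a0 r0 hr0lt
  rw [← hm0] at hchar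
  simp only [gapsOf, Set.mem_setOf_eq, Finset.mem_coe, Finset.mem_range, gapF,
    Finset.mem_biUnion, Finset.mem_Ico]
  rw [hchar]
  constructor
  · intro hgap
    push_neg at hgap
    obtain ⟨hr0, hrest⟩ := hgap
    rcases Nat.eq_zero_or_pos a0 with rfl | ha1
    · refine ⟨0, by omega, by omega, ?_⟩
      rw [rowc, if_pos rfl]
      omega
    · have hcov := hrest ha1
      have halt : a0 < 2*(p+1)+1 := by
        by_contra hcon
        have h1 : p + 1 ≤ (a0-1)/2 := by
          rw [Nat.le_div_iff_mul_le (by norm_num)]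
          omega
        have h2 : (p+1)*d ≤ ((a0-1)/2)*d := Nat.mul_le_mul_right d h1
        omega
      refine ⟨a0, halt, by omega, ?_⟩
      rw [rowc, if_neg (by omega)]
      omega
  · rintro ⟨a, halt, hm1, hm2⟩
    have hc := rowc_le e k d hk hd he a
    have haa : a = a0 := by
      rcases lt_trichotomy a a0 with h | h | h
      · have h5 : (a+1)*e ≤ a0*e := Nat.mul_le_mul_right e (by omega)
        have h6 : (a+1)*e = a*e + e := by ring
        omega
      · exact h
      · have h5 : (a0+1)*e ≤ a*e := Nat.mul_le_mul_right e (by omega)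
        have h6 : (a0+1)*e = a0*e + e := by ring
        omega
    subst haa
    have hr0a : r0 = m - a*e := by omega
    rcases Nat.eq_zero_or_pos a with rfl | ha1
    · rw [rowc, if_pos rfl] at hm2
      push_neg
      exact ⟨by omega, fun h => by omega⟩
    · rw [rowc, if_neg (by omega)] at hm2
      push_neg
      refine ⟨by omega, fun _ => ?_⟩
      omega

include hk hd he hA hB in
lemma gap_greatest : IsGreatest (↑(gapF e k d p) : Set ℕ) ((2*p+2)*e + (k - p*d)) := by
  constructor
  · simp only [Finset.mem_coe, gapF, Finset.mem_biUnion, Finset.mem_range, Finset.mem_Ico]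
    refine ⟨2*p+2, by omega, by omega, ?_⟩
    rw [rowc, if_neg (by omega), show (2*p+2-1)/2 = p by omega]
    omega
  · rintro m hm
    simp only [Finset.mem_coe, gapF, Finset.mem_biUnion, Finset.mem_range, Finset.mem_Ico] at hm
    obtain ⟨a, halt, hm1, hm2⟩ := hm
    have hc := rowc_le e k d hk hd he a
    rcases Nat.lt_or_ge a (2*p+2) with hlt | hge
    · have h5 : (a+1)*e ≤ (2*p+2)*e := Nat.mul_le_mul_right e (by omega)
      have h6 : (a+1)*e = a*e + e := by ring
      omega
    · have ha : a = 2*p+2 := by omega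
      subst ha
      rw [rowc, if_neg (by omega), show (2*p+2-1)/2 = p by omega] at hm2
      omega

include hk hd he hA hB in
lemma gap_card : (gapF e k d p).card = (e - 1) + ∑ j ∈ Finset.range (p+1), 2*(k - j*d) := by
  rw [gapF, Finset.card_biUnion]
  · have hsum : ∀ N, ∑ a ∈ Finset.range (2*N+1), (Finset.Ico (a*e+1) (a*e + rowc e k d a + 1)).card
        = (e-1) + ∑ j ∈ Finset.range N, 2*(k - j*d) := by
      intro N
      induction N with
      | zero =>
        simp [Finset.sum_range_one, Nat.card_Ico, rowc]
      | succ N ih =>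
        rw [show 2*(N+1)+1 = (2*N+1)+1+1 by ring, Finset.sum_range_succ, Finset.sum_range_succ,
          ih, Finset.sum_range_succ]
        rw [Nat.card_Ico, Nat.card_Ico, rowc, rowc, if_neg (by omega), if_neg (by omega),
          show (2*N+1+1-1)/2 = N by omega, show (2*N+1-1)/2 = N by omega]
        omega
    rw [hsum (p+1)]
  · intro x hx y hy hxy
    rw [Function.onFun, Finset.disjoint_left]
    intro m hmx hmy
    simp only [Finset.mem_Ico] at hmx hmy
    have hcx := rowc_le e k d hk hd he x
    have hcy := rowc_le e k d hk hd he y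
    rcases lt_trichotomy x y with h | h | h
    · have := Nat.mul_le_mul_right e (show x + 1 ≤ y by omega)
      have hx1 : (x+1)*e = x*e + e := by ring
      omega
    · exact hxy h
    · have := Nat.mul_le_mul_right e (show y + 1 ≤ x by omega)
      have hy1 : (y+1)*e = y*e + e := by ring
      omega

end Gaps

lemma sally_sumZ (K D : ℤ) (N : ℕ) :
    ∑ j ∈ Finset.range N, (2*K - 2*D*(j:ℤ)) = 2*(N:ℤ)*K - D*(N:ℤ)*((N:ℤ)-1) := by
  induction N with
  | zero => simp
  | succ N ih =>
    rw [Finset.sum_range_succ, ih]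
    push_cast
    ring

theorem sally_j_one_symmetric_iff (e k n : ℕ) (he : 0 < e) (hk : 0 < k) (hn : 0 < n)
    (hke : k ≤ e - 3)
    (h1 : ((n : ℚ) - 2) / ((n : ℚ) - 1) < (k : ℚ) / ((e : ℚ) - 1))
    (h2 : (k : ℚ) / ((e : ℚ) - 1) ≤ ((n : ℚ) - 1) / n) :
    IsSymmetricNS (sally e k 1) ↔
      ((n : ℤ) - 1) * k = ((n : ℤ) - 2) * e - ((n : ℤ) - 3) := by
  have hke' : k + 3 ≤ e := by omega
  obtain ⟨d, hd2, hed⟩ : ∃ d, 2 ≤ d ∧ e = k + 1 + d := ⟨e - (k+1), by omega, by omega⟩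
  have hepos : (0:ℚ) < (e:ℚ) - 1 := by
    have h4 : (4:ℚ) ≤ (e:ℚ) := by exact_mod_cast (show 4 ≤ e by omega)
    linarith
  have hkpos : (0:ℚ) < (k:ℚ) := by exact_mod_cast hk
  have hn2 : 2 ≤ n := by
    by_contra hcon
    have hn1 : n = 1 := by omega
    subst hn1
    norm_num at h2
    have := div_pos hkpos hepos
    linarith
  obtain ⟨p, rfl⟩ : ∃ p, n = p + 2 := ⟨n - 2, by omega⟩
  have hnq : (0:ℚ) < ((p:ℚ)+2) := by positivity
  have hn1q : (0:ℚ) < ((p:ℚ)+2) - 1 := by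
    have : (0:ℚ) ≤ (p:ℚ) := by positivity
    linarith
  push_cast at h1 h2
  rw [div_lt_div_iff₀ (by linarith) hepos] at h1
  rw [div_le_div_iff₀ hepos (by linarith)] at h2
  have helZ : (e:ℤ) = (k:ℤ) + 1 + (d:ℤ) := by exact_mod_cast hed
  have hz1 : ((p:ℤ))*((e:ℤ)-1) < (k:ℤ)*((p:ℤ)+1) := by
    have hq : ((p:ℚ))*((e:ℚ)-1) < (k:ℚ)*((p:ℚ)+1) := by nlinarith [h1]
    exact_mod_cast hq
  have hz2 : (k:ℤ)*((p:ℤ)+2) ≤ ((p:ℤ)+1)*((e:ℤ)-1) := by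
    have hq : ((k:ℚ))*((p:ℚ)+2) ≤ ((p:ℚ)+1)*((e:ℚ)-1) := by nlinarith [h2]
    exact_mod_cast hq
  have hA : p*d < k := by
    zify
    rw [helZ] at hz1
    nlinarith [hz1]
  have hB : k ≤ (p+1)*d := by
    zify
    rw [helZ] at hz2
    nlinarith [hz2]
  have hk1 : 1 ≤ k := hk
  have hgap := gap_eq e k d p hk1 hd2 hed hA hB
  have hgr := gap_greatest e k d p hk1 hd2 hed hA hB
  have hcard := gap_card e k d p hk1 hd2 hed hA hB
  have hF : frobeniusNumber (sally e k 1) = (2*p+2)*e + (k - p*d) := by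
    rw [frobeniusNumber, hgap]
    exact hgr.csSup_eq
  have hg : genusOf (sally e k 1) = (e-1) + ∑ j ∈ Finset.range (p+1), 2*(k - j*d) := by
    rw [genusOf, hgap, Nat.card_coe_set_eq, Set.ncard_coe_finset, hcard]
  have hsumZ : ((∑ j ∈ Finset.range (p+1), 2*(k - j*d) : ℕ) : ℤ)
      = 2*((p:ℤ)+1)*k - d*((p:ℤ)+1)*p := by
    rw [Nat.cast_sum]
    have hterm : ∀ j ∈ Finset.range (p+1), ((2*(k - j*d) : ℕ) : ℤ) = 2*(k:ℤ) - 2*(d:ℤ)*(j:ℤ) := by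
      intro j hj
      simp only [Finset.mem_range] at hj
      have hjd : j*d ≤ k := le_trans (Nat.mul_le_mul_right d (by omega)) (le_of_lt hA)
      rw [Nat.cast_mul, Nat.cast_sub hjd]
      push_cast
      ring
    rw [Finset.sum_congr rfl hterm, sally_sumZ]
    push_cast
    ring
  rw [IsSymmetricNS, hF, hg]
  rw [← Nat.cast_inj (R := ℤ)]
  have hAZ : ((2 * ((e-1) + ∑ j ∈ Finset.range (p+1), 2*(k - j*d)) : ℕ) : ℤ)
      = 2*(((e:ℤ)-1) + (2*((p:ℤ)+1)*k - d*((p:ℤ)+1)*p)) := by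
    rw [Nat.cast_mul, Nat.cast_add, hsumZ, Nat.cast_sub (by omega : 1 ≤ e)]
    push_cast
    ring
  have hBZ : (((2*p+2)*e + (k - p*d) + 1 : ℕ) : ℤ)
      = (2*(p:ℤ)+2)*e + ((k:ℤ) - (p:ℤ)*d) + 1 := by
    rw [Nat.cast_add, Nat.cast_add, Nat.cast_sub (le_of_lt (by exact_mod_cast hA))]
    push_cast
    ring
  rw [hAZ, hBZ]
  push_cast
  have key : 2*(((e:ℤ)-1) + (2*((p:ℤ)+1)*k - d*((p:ℤ)+1)*p))
      - ((2*(p:ℤ)+2)*e + ((k:ℤ) - (p:ℤ)*d) + 1)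
      = (2*(p:ℤ)+3) * (((p:ℤ)+1)*(k:ℤ) - ((p:ℤ)*(e:ℤ) - ((p:ℤ)-1))) := by
    rw [helZ]
    ring
  constructor
  · intro h
    have h0 : (2*(p:ℤ)+3) * (((p:ℤ)+1)*(k:ℤ) - ((p:ℤ)*(e:ℤ) - ((p:ℤ)-1))) = 0 := by
      rw [← key]
      linarith
    rcases mul_eq_zero.mp h0 with h3 | h3
    · exfalso
      have : (0:ℤ) < 2*(p:ℤ)+3 := by positivity
      omega
    · linear_combination h3
  · intro h
    have h3 : ((p:ℤ)+1)*(k:ℤ) - ((p:ℤ)*(e:ℤ) - ((p:ℤ)-1)) = 0 := by linear_combination h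
    have h0 := key
    rw [h3, mul_zero] at h0
    linarith
end

section
/- Let e ≥ 6. The numerical semigroup ⟨e, 2e-2, 2e-1⟩ (the Sally type semigroup S_{e-3}^e(1)) is symmetric if and only if e is even. -/
lemma mem_closure_triple {x y z n : ℕ} :
    n ∈ AddSubmonoid.closure ({x, y, z} : Set ℕ) ↔ ∃ a b c : ℕ, n = a*x + b*y + c*z := by
  constructor
  · intro h
    induction h using AddSubmonoid.closure_induction with
    | mem w hw =>
      simp only [Set.mem_insert_iff, Set.mem_singleton_iff] at hw
      rcases hw with rfl | rfl | rfl
      · exact ⟨1, 0, 0, by ring⟩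
      · exact ⟨0, 1, 0, by ring⟩
      · exact ⟨0, 0, 1, by ring⟩
    | zero => exact ⟨0, 0, 0, by ring⟩
    | add a b ha hb iha ihb =>
      obtain ⟨a1, b1, c1, rfl⟩ := iha
      obtain ⟨a2, b2, c2, rfl⟩ := ihb
      exact ⟨a1 + a2, b1 + b2, c1 + c2, by ring⟩
  · rintro ⟨a, b, c, rfl⟩
    have hx : x ∈ AddSubmonoid.closure ({x,y,z} : Set ℕ) := AddSubmonoid.subset_closure (by simp)
    have hy : y ∈ AddSubmonoid.closure ({x,y,z} : Set ℕ) := AddSubmonoid.subset_closure (by simp)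
    have hz : z ∈ AddSubmonoid.closure ({x,y,z} : Set ℕ) := AddSubmonoid.subset_closure (by simp)
    exact add_mem (add_mem (by simpa [nsmul_eq_mul] using nsmul_mem hx a)
      (by simpa [nsmul_eq_mul] using nsmul_mem hy b))
      (by simpa [nsmul_eq_mul] using nsmul_mem hz c)

lemma abc_iff_kt {e : ℕ} (he : 6 ≤ e) (n : ℕ) :
    (∃ a b c : ℕ, n = a*e + b*(2*e-2) + c*(2*e-1)) ↔
      ∃ k t : ℕ, n + t = k*e ∧ t + t % 2 ≤ k := by
  obtain ⟨m, rfl⟩ : ∃ m, e = m + 1 := ⟨e - 1, by omega⟩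
  have hg1 : 2*(m+1)-2 = 2*m := by omega
  have hg2 : 2*(m+1)-1 = 2*m+1 := by omega
  rw [hg1, hg2]
  constructor
  · rintro ⟨a, b, c, rfl⟩
    refine ⟨a + 2*b + 2*c, 2*b + c, ?_, by omega⟩
    ring
  · rintro ⟨k, t, h1, h2⟩
    obtain ⟨b, c, hbc, hc⟩ : ∃ b c, t = 2*b + c ∧ c ≤ 1 := ⟨t/2, t%2, by omega, by omega⟩
    refine ⟨k - (2*b + 2*c), b, c, ?_⟩
    have hk : (k - (2*b + 2*c)) + 2*b + 2*c = k := by omega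
    have key : ((k - (2*b + 2*c)) + 2*b + 2*c) * (m+1)
        = (k - (2*b + 2*c))*(m+1) + b*(2*m) + c*(2*m+1) + (2*b + c) := by ring
    rw [hk] at key
    omega

lemma kt_reduce {e : ℕ} (he : 6 ≤ e) : ∀ t n k : ℕ, n + t = k*e → t + t % 2 ≤ k →
    ∃ k' t' : ℕ, n + t' = k'*e ∧ t' < e ∧ t' + t' % 2 ≤ k' := by
  intro t
  induction t using Nat.strong_induction_on with
  | _ t ih =>
    intro n k h1 h2
    by_cases ht : t < e
    · exact ⟨k, t, h1, ht, h2⟩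
    · obtain ⟨k', rfl⟩ : ∃ k', k = k' + 1 := ⟨k - 1, by omega⟩
      refine ih (t - e) (by omega) n k' ?_ (by omega)
      have h3 : (k'+1)*e = k'*e + e := by ring
      omega

lemma mem_iff {e : ℕ} (he : 6 ≤ e) (n : ℕ) :
    n ∈ AddSubmonoid.closure ({e, 2*e-2, 2*e-1} : Set ℕ) ↔
      ∃ k t : ℕ, n + t = k*e ∧ t < e ∧ t + t % 2 ≤ k := by
  rw [mem_closure_triple, abc_iff_kt he]
  constructor
  · rintro ⟨k, t, h1, h2⟩
    exact kt_reduce he t n k h1 h2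
  · rintro ⟨k, t, h1, _, h3⟩
    exact ⟨k, t, h1, h3⟩

lemma uniq_le {e n k r k' r' : ℕ} (hle : k ≤ k') (h1 : n + r = k*e) (h2 : n + r' = k'*e)
    (hr : r < e) (hr' : r' < e) : k = k' ∧ r = r' := by
  obtain ⟨d, rfl⟩ : ∃ d, k' = k + d := ⟨k' - k, by omega⟩
  have h3 : (k+d)*e = k*e + d*e := by ring
  rcases Nat.eq_zero_or_pos d with h0 | h0
  · have h4 : d * e = 0 := by rw [h0]; ring
    omega
  · have h5 : e ≤ d*e := Nat.le_mul_of_pos_left e h0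
    omega

lemma uniq {e n k r k' r' : ℕ} (h1 : n + r = k*e) (h2 : n + r' = k'*e)
    (hr : r < e) (hr' : r' < e) : k = k' ∧ r = r' := by
  rcases Nat.le_total k k' with h | h
  · exact uniq_le h h1 h2 hr hr'
  · obtain ⟨hk, hrr⟩ := uniq_le h h2 h1 hr' hr
    exact ⟨hk.symm, hrr.symm⟩

lemma exists_kr {e : ℕ} (he : 6 ≤ e) (n : ℕ) (hn : 1 ≤ n) :
    ∃ k r : ℕ, 1 ≤ k ∧ r < e ∧ n + r = k*e := by
  have hd := Nat.div_add_mod n e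
  by_cases h : n % e = 0
  · have hne : e ≤ n := by
      rcases Nat.lt_or_ge n e with h' | h'
      · rw [Nat.mod_eq_of_lt h'] at h; omega
      · exact h'
    refine ⟨n/e, 0, Nat.div_pos hne (by omega), by omega, ?_⟩
    have hcomm : (n/e)*e = e*(n/e) := mul_comm _ _
    omega
  · have h4 : n % e < e := Nat.mod_lt _ (by omega)
    refine ⟨n/e + 1, e - n % e, Nat.succ_le_succ (Nat.zero_le _), by omega, ?_⟩
    have h3 : (n/e+1)*e = e*(n/e) + e := by ring
    omega

lemma gap_iff {e : ℕ} (he : 6 ≤ e) (n : ℕ) :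
    n ∉ AddSubmonoid.closure ({e, 2*e-2, 2*e-1} : Set ℕ) ↔
      ∃ k r : ℕ, 1 ≤ k ∧ k ≤ e ∧ r < e ∧ k < r + r % 2 ∧ n + r = k*e := by
  rw [mem_iff he]
  constructor
  · intro h
    have hn : 1 ≤ n := by
      by_contra h0
      exact h ⟨0, 0, by omega, by omega, by omega⟩
    obtain ⟨k, r, hk, hr, hkr⟩ := exists_kr he n hn
    have hlt : k < r + r % 2 := by
      by_contra h2
      push_neg at h2
      exact h ⟨k, r, hkr, hr, h2⟩
    exact ⟨k, r, hk, by omega, hr, hlt, hkr⟩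
  · rintro ⟨k, r, hk1, hke, hr, hlt, hkr⟩ ⟨k', t', h1, h2, h3⟩
    obtain ⟨hkk, hrt⟩ := uniq hkr h1 hr h2
    omega

def gapPairs (e : ℕ) : Finset (ℕ × ℕ) :=
  (Finset.range e ×ˢ Finset.Icc 1 e).filter fun p => p.2 < p.1 + p.1 % 2

def gapFinset (e : ℕ) : Finset ℕ := (gapPairs e).image fun p => p.2 * e - p.1

lemma gaps_eq {e : ℕ} (he : 6 ≤ e) :
    gapsOf (AddSubmonoid.closure ({e, 2*e-2, 2*e-1} : Set ℕ)) = ↑(gapFinset e) := by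
  ext n
  simp only [gapsOf, Set.mem_setOf_eq, gapFinset, gapPairs, Finset.coe_image, Set.mem_image,
    Finset.mem_coe, Finset.mem_filter, Finset.mem_product, Finset.mem_range, Finset.mem_Icc]
  rw [gap_iff he]
  constructor
  · rintro ⟨k, r, hk1, hke, hr, hlt, hkr⟩
    exact ⟨(r, k), ⟨⟨hr, hk1, hke⟩, hlt⟩, by dsimp only; omega⟩
  · rintro ⟨⟨r, k⟩, ⟨⟨hr, hk1, hke⟩, hlt⟩, rfl⟩
    refine ⟨k, r, hk1, hke, hr, hlt, ?_⟩
    have h5 : e ≤ k*e := Nat.le_mul_of_pos_left e (by omega)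
    dsimp only
    omega

lemma sum_f : ∀ m : ℕ, 1 ≤ m →
    2 * (∑ r ∈ Finset.range m, (r + r % 2 - 1)) + m % 2 + 2*m = m*m + 2 := by
  intro m hm
  induction m with
  | zero => omega
  | succ p ih =>
    rcases Nat.eq_zero_or_pos p with rfl | hp
    · simp
    · rw [Finset.sum_range_succ]
      have h := ih hp
      have h2 : (p+1)*(p+1) = p*p + 2*p + 1 := by ring
      omega

lemma card_gapPairs {e : ℕ} (he : 6 ≤ e) :
    2 * (gapPairs e).card + e % 2 + 2*e = e*e + 2 := by
  have h1 : (gapPairs e).card = ∑ r ∈ Finset.range e, (r + r % 2 - 1) := by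
    rw [gapPairs, Finset.card_filter, Finset.sum_product]
    refine Finset.sum_congr rfl fun r hr => ?_
    rw [Finset.mem_range] at hr
    rw [← Finset.card_filter]
    have h2 : (Finset.Icc 1 e).filter (fun k => k < r + r % 2)
        = Finset.Icc 1 (r + r % 2 - 1) := by
      ext k
      simp only [Finset.mem_filter, Finset.mem_Icc]
      omega
    rw [h2, Nat.card_Icc]
    omega
  rw [h1]
  exact sum_f e (by omega)

lemma card_gapFinset {e : ℕ} (he : 6 ≤ e) : (gapFinset e).card = (gapPairs e).card := by
  rw [gapFinset]
  apply Finset.card_image_of_injOn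
  rintro ⟨r, k⟩ h1 ⟨r', k'⟩ h2 heq
  simp only [gapPairs, Finset.coe_filter, Set.mem_setOf_eq, Finset.mem_product,
    Finset.mem_range, Finset.mem_Icc] at h1 h2
  simp only at heq
  have he1 : e ≤ k*e := Nat.le_mul_of_pos_left e (by omega)
  have he2 : e ≤ k'*e := Nat.le_mul_of_pos_left e (by omega)
  have h3 : (k*e - r) + r = k*e := by omega
  have h4 : (k*e - r) + r' = k'*e := by omega
  obtain ⟨hk, hr⟩ := uniq h3 h4 h1.1.1 h2.1.1
  simp only [Prod.mk.injEq]
  omega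

lemma genus_eq {e : ℕ} (he : 6 ≤ e) :
    2 * genusOf (AddSubmonoid.closure ({e, 2*e-2, 2*e-1} : Set ℕ)) + e % 2 + 2*e = e*e + 2 := by
  have hg : genusOf (AddSubmonoid.closure ({e, 2*e-2, 2*e-1} : Set ℕ)) = (gapPairs e).card := by
    rw [genusOf, gaps_eq he, Nat.card_coe_set_eq, Set.ncard_coe_finset, card_gapFinset he]
  rw [hg]
  exact card_gapPairs he

lemma frob_even {e : ℕ} (he : 6 ≤ e) (h2 : e % 2 = 0) :
    frobeniusNumber (AddSubmonoid.closure ({e, 2*e-2, 2*e-1} : Set ℕ)) = (e-1)*(e-1) := by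
  obtain ⟨p, rfl⟩ : ∃ p, e = p + 1 := ⟨e - 1, by omega⟩
  have hp : p + 1 - 1 = p := by omega
  rw [frobeniusNumber]
  apply IsGreatest.csSup_eq
  constructor
  · show _ ∈ gapsOf _
    simp only [gapsOf, Set.mem_setOf_eq]
    rw [gap_iff he]
    refine ⟨p, p, by omega, by omega, by omega, by omega, ?_⟩
    rw [hp]; ring
  · rintro n hn
    simp only [gapsOf, Set.mem_setOf_eq] at hn
    rw [gap_iff he] at hn
    obtain ⟨k, r, hk1, hke, hr, hlt, hkr⟩ := hn
    rw [hp]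
    have hkp : k ≤ p := by omega
    have h5 : k*(p+1) + (p-k)*(p+1) = p*p + p := by
      rw [← add_mul]
      have hx : k + (p - k) = p := by omega
      rw [hx]; ring
    rcases Nat.eq_zero_or_pos (p - k) with h0 | h0
    · have hY : (p-k)*(p+1) = 0 := by rw [h0]; ring
      omega
    · have hY : p+1 ≤ (p-k)*(p+1) := Nat.le_mul_of_pos_left (p+1) h0
      omega

lemma frob_odd {e : ℕ} (he : 6 ≤ e) (h2 : e % 2 = 1) :
    frobeniusNumber (AddSubmonoid.closure ({e, 2*e-2, 2*e-1} : Set ℕ)) = (e-1)*(e-2) := by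
  obtain ⟨p, rfl⟩ : ∃ p, e = p + 2 := ⟨e - 2, by omega⟩
  have hpa : p + 2 - 1 = p + 1 := by omega
  have hpb : p + 2 - 2 = p := by omega
  rw [frobeniusNumber]
  apply IsGreatest.csSup_eq
  constructor
  · show _ ∈ gapsOf _
    simp only [gapsOf, Set.mem_setOf_eq]
    rw [gap_iff he]
    refine ⟨p, p, by omega, by omega, by omega, by omega, ?_⟩
    rw [hpa, hpb]; ring
  · rintro n hn
    simp only [gapsOf, Set.mem_setOf_eq] at hn
    rw [gap_iff he] at hn
    obtain ⟨k, r, hk1, hke, hr, hlt, hkr⟩ := hn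
    rw [hpa, hpb]
    have hkp : k ≤ p := by omega
    have h5 : k*(p+2) + (p-k)*(p+2) = p*p + 2*p := by
      rw [← add_mul]
      have hx : k + (p - k) = p := by omega
      rw [hx]; ring
    have hF : (p+1)*p = p*p + p := by ring
    rcases Nat.eq_zero_or_pos (p - k) with h0 | h0
    · have hY : (p-k)*(p+2) = 0 := by rw [h0]; ring
      omega
    · have hY : p+2 ≤ (p-k)*(p+2) := Nat.le_mul_of_pos_left (p+2) h0
      omega

theorem sally_e_em3_1_symmetric_iff (e : ℕ) (he : 6 ≤ e) :
    IsSymmetricNS (AddSubmonoid.closure {e, 2 * e - 2, 2 * e - 1}) ↔ 2 ∣ e := by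
  have hg := genus_eq he
  by_cases h2 : e % 2 = 0
  · constructor
    · intro _; omega
    · intro _
      rw [IsSymmetricNS, frob_even he h2]
      have h3 : (e-1)*(e-1) + 2*e = e*e + 1 := by
        obtain ⟨p, rfl⟩ : ∃ p, e = p + 1 := ⟨e - 1, by omega⟩
        have hp : p + 1 - 1 = p := by omega
        rw [hp]; ring
      omega
  · have h2' : e % 2 = 1 := by omega
    constructor
    · intro hs
      exfalso
      rw [IsSymmetricNS, frob_odd he h2'] at hs
      have h3 : (e-1)*(e-2) + 3*e = e*e + 2 := by
        obtain ⟨p, rfl⟩ : ∃ p, e = p + 2 := ⟨e - 2, by omega⟩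
        have ha : p + 2 - 1 = p + 1 := by omega
        have hb : p + 2 - 2 = p := by omega
        rw [ha, hb]; ring
      omega
    · intro hd
      exact absurd hd (by omega)
end
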